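/- Gaussian bridge Markov property at a stopping time: let $(X_1,\dots,X_\kappa)$ be distributed according to the discrete Gaussian bridge $\mathcal{B}_\kappa(x_0,x_{\kappa+1})$ with density proportional to $\exp(-\frac12((x_0-x_1)^2+(x_1-x_2)^2+\dots+(x_\kappa-x_{\kappa+1})^2))$, and let $K$ be a stopping time with respect to the natural filtration of $(X_1,\dots,X_\kappa)$ satisfying $K<\kappa$ almost surely. Then the conditional law of $(X_{K+1},\dots,X_\kappa)$ given $(X_1,\dots,X_K)$ is the Gaussian bridge $\mathcal{B}_{\kappa-K}(X_K,x_{\kappa+1})$. -/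

import Mathlib

open MeasureTheory

/-- Extension of `x : Fin m → ℝ` by the endpoints `a` at index `0` and `b` at indices
`> m`, so that `ext m a b x i = x_i` for `1 ≤ i ≤ m` (1-based indexing). -/
noncomputable def bridgeExt (m : ℕ) (a b : ℝ) (x : Fin m → ℝ) : ℕ → ℝ :=
  fun i => if h : 1 ≤ i ∧ i ≤ m then x ⟨i - 1, by omega⟩ else if i = 0 then a else b

/-- Unnormalized density of the discrete Gaussian bridge `𝓑_m(a,b)`:
`exp(-½((a-x₁)² + (x₁-x₂)² + ⋯ + (x_m-b)²))`. -/
noncomputable def bridgeDensity (m : ℕ) (a b : ℝ) (x : Fin m → ℝ) : ℝ :=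
  Real.exp (-(1 / 2) * ∑ i ∈ Finset.range (m + 1),
    (bridgeExt m a b x i - bridgeExt m a b x (i + 1)) ^ 2)

/-- The discrete Gaussian bridge distribution `𝓑_m(a,b)` on `ℝ^m`. -/
noncomputable def bridgeMeasure (m : ℕ) (a b : ℝ) : Measure (Fin m → ℝ) :=
  ((volume.withDensity fun x => ENNReal.ofReal (bridgeDensity m a b x)) Set.univ)⁻¹ •
    (volume.withDensity fun x => ENNReal.ofReal (bridgeDensity m a b x))

/-- The bridge measure `𝓑_m(a,b)` transported to the sequence space `ℕ → ℝ` by padding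
with `0` beyond index `m` (to accommodate a random length). -/
noncomputable def paddedBridgeMeasure (m : ℕ) (a b : ℝ) : Measure (ℕ → ℝ) :=
  Measure.map (fun (y : Fin m → ℝ) (i : ℕ) => if h : i < m then y ⟨i, h⟩ else 0)
    (bridgeMeasure m a b)

/-- The σ-field `σ(X_1,…,X_l)` generated by the first `min l κ` components of `X`. -/
noncomputable def headField {Ω : Type*} (k : ℕ) (X : Ω → Fin k → ℝ) (l : ℕ) :
    MeasurableSpace Ω :=
  MeasurableSpace.comap
    (fun ω (j : Fin (min l k)) => X ω ⟨j.1, by have := j.2; omega⟩) MeasurableSpace.pi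

namespace BridgeAux

open ENNReal Real

lemma bridgeExt_zero (m : ℕ) (a b : ℝ) (x : Fin m → ℝ) : bridgeExt m a b x 0 = a := by
  simp [bridgeExt]

lemma bridgeExt_of_gt {m i : ℕ} (a b : ℝ) (x : Fin m → ℝ) (h : m < i) :
    bridgeExt m a b x i = b := by
  rw [bridgeExt, dif_neg (by omega), if_neg (by omega)]

lemma bridgeExt_of_le {m i : ℕ} (a b : ℝ) (x : Fin m → ℝ) (h1 : 1 ≤ i) (h2 : i ≤ m) :
    bridgeExt m a b x i = x ⟨i - 1, by omega⟩ := dif_pos ⟨h1, h2⟩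

lemma measurable_bridgeExt (m : ℕ) (b : ℝ) (i : ℕ) :
    Measurable fun p : ℝ × (Fin m → ℝ) => bridgeExt m p.1 b p.2 i := by
  unfold bridgeExt
  by_cases h : 1 ≤ i ∧ i ≤ m
  · simp only [dif_pos h]
    exact (measurable_pi_apply _).comp measurable_snd
  · simp only [dif_neg h]
    split_ifs
    exacts [measurable_fst, measurable_const]

lemma measurable_bridgeDensity2 (m : ℕ) (b : ℝ) :
    Measurable fun p : ℝ × (Fin m → ℝ) => bridgeDensity m p.1 b p.2 := by
  unfold bridgeDensity
  exact Real.measurable_exp.comp (measurable_const.mul (Finset.measurable_sum _ fun i _ =>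
    ((measurable_bridgeExt m b i).sub (measurable_bridgeExt m b (i + 1))).pow_const 2))

lemma measurable_bridgeExt1 (m : ℕ) (a b : ℝ) (i : ℕ) :
    Measurable fun x : Fin m → ℝ => bridgeExt m a b x i := by
  unfold bridgeExt
  by_cases h : 1 ≤ i ∧ i ≤ m
  · simp only [dif_pos h]
    exact measurable_pi_apply _
  · simp only [dif_neg h]
    split_ifs
    exacts [measurable_const, measurable_const]

lemma measurable_bridgeDensity (m : ℕ) (a b : ℝ) : Measurable (bridgeDensity m a b) := by
  unfold bridgeDensity
  exact Real.measurable_exp.comp (measurable_const.mul (Finset.measurable_sum _ fun i _ =>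
    ((measurable_bridgeExt1 m a b i).sub (measurable_bridgeExt1 m a b (i + 1))).pow_const 2))

lemma bridgeDensity_pos (m : ℕ) (a b : ℝ) (x : Fin m → ℝ) : 0 < bridgeDensity m a b x :=
  Real.exp_pos _

lemma bridgeDensity_le_one (m : ℕ) (a b : ℝ) (x : Fin m → ℝ) : bridgeDensity m a b x ≤ 1 := by
  rw [bridgeDensity, Real.exp_le_one_iff]
  have : 0 ≤ ∑ i ∈ Finset.range (m + 1),
      (bridgeExt m a b x i - bridgeExt m a b x (i + 1)) ^ 2 :=
    Finset.sum_nonneg fun i _ => sq_nonneg _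
  nlinarith

noncomputable def Zb (m : ℕ) (a b : ℝ) : ℝ≥0∞ :=
  ∫⁻ x, ENNReal.ofReal (bridgeDensity m a b x)

lemma bridgeMeasure_eq (m : ℕ) (a b : ℝ) :
    bridgeMeasure m a b =
      (Zb m a b)⁻¹ • volume.withDensity fun x => ENNReal.ofReal (bridgeDensity m a b x) := by
  rw [bridgeMeasure, Zb]
  congr 2
  rw [withDensity_apply _ MeasurableSet.univ, setLIntegral_univ]

lemma snoc_split (m : ℕ) (a b c : ℝ) (x : Fin m → ℝ) :
    bridgeDensity (m + 1) a b (Fin.snoc x c) =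
      bridgeDensity m a c x * Real.exp (-(1 / 2) * (c - b) ^ 2) := by
  have key : ∀ i ≤ m + 1, bridgeExt (m + 1) a b (Fin.snoc x c) i = bridgeExt m a c x i := by
    intro i hi
    rcases Nat.eq_zero_or_pos i with h0 | h1
    · subst h0; simp [bridgeExt_zero]
    rcases Nat.lt_or_ge i (m + 1) with h | h
    · rw [bridgeExt_of_le a b _ h1 hi, bridgeExt_of_le a c x h1 (by omega)]
      have : (⟨i - 1, by omega⟩ : Fin (m + 1)) = Fin.castSucc ⟨i - 1, by omega⟩ := rfl
      rw [this, Fin.snoc_castSucc]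
    · have him : i = m + 1 := by omega
      subst him
      rw [bridgeExt_of_le a b _ h1 hi, bridgeExt_of_gt a c x (by omega)]
      have : (⟨m + 1 - 1, by omega⟩ : Fin (m + 1)) = Fin.last m := by
        ext; simp
      rw [this, Fin.snoc_last]
  rw [bridgeDensity, bridgeDensity, ← Real.exp_add]
  congr 1
  rw [Finset.sum_range_succ, mul_add]
  congr 1
  · congr 1
    refine Finset.sum_congr rfl fun i hi => ?_
    rw [Finset.mem_range] at hi
    rw [key i (by omega), key (i + 1) (by omega)]
  · rw [key (m + 1) le_rfl, bridgeExt_of_gt a c x (by omega),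
      bridgeExt_of_gt a b _ (by omega)]

lemma gauss_lintegral (b : ℝ) :
    ∫⁻ c : ℝ, ENNReal.ofReal (Real.exp (-(1 / 2) * (c - b) ^ 2)) =
      ENNReal.ofReal (Real.sqrt (2 * Real.pi)) := by
  have hint : Integrable (fun c : ℝ => Real.exp (-(1 / 2) * (c - b) ^ 2)) := by
    have := (integrable_exp_neg_mul_sq (by norm_num : (0:ℝ) < 1 / 2)).comp_sub_right b
    simpa using this
  rw [← ofReal_integral_eq_lintegral_ofReal hint
    (Filter.Eventually.of_forall fun c => (Real.exp_pos _).le)]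
  congr 1
  have : (fun c : ℝ => Real.exp (-(1 / 2) * (c - b) ^ 2)) =
      fun c : ℝ => (fun u : ℝ => Real.exp (-(1 / 2) * u ^ 2)) (c - b) := rfl
  rw [this, integral_sub_right_eq_self (fun u : ℝ => Real.exp (-(1 / 2) * u ^ 2)) b]
  have := integral_gaussian (1 / 2)
  simp only [neg_mul] at this ⊢
  rw [this]
  congr 1
  rw [div_div_eq_mul_div, div_one]
  ring_nf


lemma Zb_le (m : ℕ) : ∀ a b : ℝ, Zb m a b ≤ (ENNReal.ofReal (Real.sqrt (2 * Real.pi))) ^ m := by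
  induction m with
  | zero =>
    intro a b
    have h1 : Zb 0 a b ≤ ∫⁻ _x : Fin 0 → ℝ, 1 :=
      lintegral_mono fun x => ENNReal.ofReal_le_one.mpr (bridgeDensity_le_one 0 a b x)
    have h2 : (∫⁻ _x : Fin 0 → ℝ, 1) = volume (Set.univ : Set (Fin 0 → ℝ)) := lintegral_one
    have h3 : volume (Set.univ : Set (Fin 0 → ℝ)) = 1 := by
      rw [volume_pi, Measure.pi_univ]
      simp
    rw [pow_zero]
    calc Zb 0 a b ≤ _ := h1
      _ = 1 := by rw [h2, h3]
  | succ m ih =>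
    intro a b
    have hmp := MeasureTheory.volume_preserving_piFinSuccAbove
      (fun _ : Fin (m + 1) => ℝ) (Fin.last m)
    set e := MeasurableEquiv.piFinSuccAbove (fun _ : Fin (m + 1) => ℝ) (Fin.last m) with he
    have hme : Measurable fun p : ℝ × (Fin m → ℝ) =>
        ENNReal.ofReal (bridgeDensity (m + 1) a b (e.symm p)) :=
      ((measurable_bridgeDensity (m + 1) a b).comp e.symm.measurable).ennreal_ofReal
    have step1 : Zb (m + 1) a b = ∫⁻ p : ℝ × (Fin m → ℝ),
        ENNReal.ofReal (bridgeDensity (m + 1) a b (e.symm p)) := by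
      rw [Zb, ← hmp.lintegral_comp hme]
      congr 1
      ext z
      rw [MeasurableEquiv.symm_apply_apply]
    have hsymm : ∀ (c : ℝ) (x : Fin m → ℝ), e.symm (c, x) = Fin.snoc x c := by
      intro c x
      show (MeasurableEquiv.piFinSuccAbove (fun _ : Fin (m + 1) => ℝ) (Fin.last m)).symm (c, x)
        = Fin.snoc x c
      simp [MeasurableEquiv.piFinSuccAbove, Fin.insertNthEquiv, Fin.insertNth_last']
    rw [step1, Measure.volume_eq_prod, lintegral_prod _ hme.aemeasurable]
    have inner : ∀ c : ℝ, (∫⁻ x : Fin m → ℝ,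
        ENNReal.ofReal (bridgeDensity (m + 1) a b (e.symm (c, x)))) ≤
        (ENNReal.ofReal (Real.sqrt (2 * Real.pi))) ^ m *
          ENNReal.ofReal (Real.exp (-(1 / 2) * (c - b) ^ 2)) := by
      intro c
      have : ∀ x : Fin m → ℝ, ENNReal.ofReal (bridgeDensity (m + 1) a b (e.symm (c, x))) =
          ENNReal.ofReal (bridgeDensity m a c x) *
            ENNReal.ofReal (Real.exp (-(1 / 2) * (c - b) ^ 2)) := by
        intro x
        rw [hsymm c x, snoc_split, ENNReal.ofReal_mul (bridgeDensity_pos m a c x).le]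
      simp_rw [this]
      rw [lintegral_mul_const _ (measurable_bridgeDensity m a c).ennreal_ofReal]
      exact mul_le_mul_left (ih a c) _
    calc (∫⁻ c : ℝ, ∫⁻ x : Fin m → ℝ,
        ENNReal.ofReal (bridgeDensity (m + 1) a b (e.symm (c, x))))
        ≤ ∫⁻ c : ℝ, (ENNReal.ofReal (Real.sqrt (2 * Real.pi))) ^ m *
            ENNReal.ofReal (Real.exp (-(1 / 2) * (c - b) ^ 2)) := lintegral_mono inner
      _ = (ENNReal.ofReal (Real.sqrt (2 * Real.pi))) ^ m *
            ∫⁻ c : ℝ, ENNReal.ofReal (Real.exp (-(1 / 2) * (c - b) ^ 2)) := by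
          rw [lintegral_const_mul _ (by fun_prop)]
      _ = (ENNReal.ofReal (Real.sqrt (2 * Real.pi))) ^ (m + 1) := by
          rw [gauss_lintegral, pow_succ]

lemma Zb_lt_top (m : ℕ) (a b : ℝ) : Zb m a b < ⊤ :=
  lt_of_le_of_lt (Zb_le m a b) (ENNReal.pow_lt_top ENNReal.ofReal_lt_top)

lemma Zb_ne_top (m : ℕ) (a b : ℝ) : Zb m a b ≠ ⊤ := (Zb_lt_top m a b).ne

lemma Zb_pos (m : ℕ) (a b : ℝ) : 0 < Zb m a b := by
  rcases eq_or_lt_of_le (zero_le : 0 ≤ Zb m a b) with h | h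
  · exfalso
    have hmeas : Measurable fun x : Fin m → ℝ => ENNReal.ofReal (bridgeDensity m a b x) :=
      (measurable_bridgeDensity m a b).ennreal_ofReal
    have h0 := (lintegral_eq_zero_iff hmeas).mp h.symm
    have huniv : {x : Fin m → ℝ | ENNReal.ofReal (bridgeDensity m a b x) ≠ 0} = Set.univ := by
      ext x
      simp only [Set.mem_setOf_eq, Set.mem_univ, iff_true, ne_eq]
      simp [ENNReal.ofReal_eq_zero, not_le, bridgeDensity_pos m a b x]
    have : volume (Set.univ : Set (Fin m → ℝ)) = 0 := by
      have := Filter.eventuallyEq_iff_exists_mem.mp h0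
      rw [← huniv]
      simpa [Filter.EventuallyEq, ae_iff] using h0
    have hne : volume (Set.univ : Set (Fin m → ℝ)) ≠ 0 := by
      rw [volume_pi, Measure.pi_univ]
      simp [Real.volume_univ]
    exact hne this
  · exact h

lemma Zb_ne_zero (m : ℕ) (a b : ℝ) : Zb m a b ≠ 0 := (Zb_pos m a b).ne'

lemma Zb_toReal_pos (m : ℕ) (a b : ℝ) : 0 < (Zb m a b).toReal :=
  ENNReal.toReal_pos (Zb_ne_zero m a b) (Zb_ne_top m a b)

instance bridge_isProb (m : ℕ) (a b : ℝ) : IsProbabilityMeasure (bridgeMeasure m a b) := by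
  constructor
  rw [bridgeMeasure_eq, Measure.smul_apply, withDensity_apply _ MeasurableSet.univ,
    setLIntegral_univ, smul_eq_mul, ← Zb]
  exact ENNReal.inv_mul_cancel (Zb_ne_zero m a b) (Zb_ne_top m a b)

lemma integrable_bridgeDensity (m : ℕ) (a b : ℝ) : Integrable (bridgeDensity m a b) := by
  refine ⟨(measurable_bridgeDensity m a b).aestronglyMeasurable, ?_⟩
  rw [hasFiniteIntegral_iff_ofReal (Filter.Eventually.of_forall fun x =>
    (bridgeDensity_pos m a b x).le)]
  exact Zb_lt_top m a b

lemma integral_bridgeDensity (m : ℕ) (a b : ℝ) :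
    ∫ x, bridgeDensity m a b x = (Zb m a b).toReal := by
  rw [integral_eq_lintegral_of_nonneg_ae (Filter.Eventually.of_forall fun x =>
    (bridgeDensity_pos m a b x).le) (measurable_bridgeDensity m a b).aestronglyMeasurable, Zb]

lemma setIntegral_bridgeMeasure (m : ℕ) (a b : ℝ) (F : (Fin m → ℝ) → ℝ)
    {s : Set (Fin m → ℝ)} (hs : MeasurableSet s) :
    ∫ x in s, F x ∂bridgeMeasure m a b =
      (Zb m a b).toReal⁻¹ * ∫ x in s, F x * bridgeDensity m a b x := by
  rw [bridgeMeasure_eq, Measure.restrict_smul, integral_smul_measure, restrict_withDensity hs]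
  have hd : (fun x : Fin m → ℝ => ENNReal.ofReal (bridgeDensity m a b x)) =
      fun x => ((bridgeDensity m a b x).toNNReal : ℝ≥0∞) := rfl
  rw [hd, integral_withDensity_eq_integral_smul
    ((measurable_bridgeDensity m a b).real_toNNReal) F]
  rw [ENNReal.toReal_inv, smul_eq_mul]
  congr 1
  refine integral_congr_ae (Filter.Eventually.of_forall fun x => ?_)
  show (bridgeDensity m a b x).toNNReal • F x = F x * bridgeDensity m a b x
  rw [NNReal.smul_def, smul_eq_mul, Real.coe_toNNReal _ (bridgeDensity_pos m a b x).le, mul_comm]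


noncomputable def splitE (l m : ℕ) : ((Fin l → ℝ) × (Fin m → ℝ)) ≃ᵐ (Fin (l + m) → ℝ) :=
  (MeasurableEquiv.sumPiEquivProdPi (fun _ : Fin l ⊕ Fin m => ℝ)).symm.trans
    (MeasurableEquiv.piCongrLeft (fun _ : Fin (l + m) => ℝ) finSumFinEquiv)

lemma splitE_mp (l m : ℕ) : MeasurePreserving (⇑(splitE l m)) volume volume := by
  have h1 := MeasureTheory.volume_measurePreserving_sumPiEquivProdPi_symm
    (fun _ : Fin l ⊕ Fin m => ℝ)
  have h2 := MeasureTheory.volume_measurePreserving_piCongrLeft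
    (fun _ : Fin (l + m) => ℝ) finSumFinEquiv
  exact h2.comp h1

lemma splitE_apply (l m : ℕ) (h : Fin l → ℝ) (y : Fin m → ℝ) :
    splitE l m (h, y) = Fin.append h y := by
  funext i
  obtain ⟨s, rfl⟩ := finSumFinEquiv.surjective i
  have hrfl : splitE l m (h, y) (finSumFinEquiv s) =
      Equiv.piCongrLeft (fun _ : Fin (l + m) => ℝ) finSumFinEquiv
        ((Equiv.sumPiEquivProdPi (fun _ : Fin l ⊕ Fin m => ℝ)).symm (h, y))
        (finSumFinEquiv s) := rfl
  rw [hrfl]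
  cases s with
  | inl i =>
    rw [Equiv.piCongrLeft_sumInl (fun _ : Fin (l + m) => ℝ) finSumFinEquiv h y i,
      finSumFinEquiv_apply_left, Fin.append_left]
  | inr j =>
    rw [Equiv.piCongrLeft_sumInr (fun _ : Fin (l + m) => ℝ) finSumFinEquiv h y j,
      finSumFinEquiv_apply_right, Fin.append_right]

noncomputable def lendpt (l : ℕ) (a : ℝ) (h : Fin l → ℝ) : ℝ :=
  if hl : l = 0 then a else h ⟨l - 1, by omega⟩

noncomputable def headD (l : ℕ) (a : ℝ) (h : Fin l → ℝ) : ℝ :=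
  Real.exp (-(1 / 2) * ∑ i ∈ Finset.range l,
    (bridgeExt l a 0 h i - bridgeExt l a 0 h (i + 1)) ^ 2)

lemma headD_pos (l : ℕ) (a : ℝ) (h : Fin l → ℝ) : 0 < headD l a h := Real.exp_pos _

lemma measurable_headD (l : ℕ) (a : ℝ) : Measurable (headD l a) := by
  unfold headD
  exact Real.measurable_exp.comp (measurable_const.mul (Finset.measurable_sum _ fun i _ =>
    ((measurable_bridgeExt1 l a 0 i).sub (measurable_bridgeExt1 l a 0 (i + 1))).pow_const 2))

lemma measurable_lendpt (l : ℕ) (a : ℝ) : Measurable (lendpt l a) := by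
  unfold lendpt
  split_ifs
  exacts [measurable_const, measurable_pi_apply _]

lemma dens_factor (l m : ℕ) (a b : ℝ) (h : Fin l → ℝ) (y : Fin m → ℝ) :
    bridgeDensity (l + m) a b (Fin.append h y) =
      headD l a h * bridgeDensity m (lendpt l a h) b y := by
  have hE1 : ∀ i ≤ l, bridgeExt (l + m) a b (Fin.append h y) i = bridgeExt l a 0 h i := by
    intro i hi
    rcases Nat.eq_zero_or_pos i with h0 | h1
    · subst h0; rw [bridgeExt_zero, bridgeExt_zero]
    · rw [bridgeExt_of_le a b _ h1 (by omega), bridgeExt_of_le a 0 h h1 hi]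
      have : (⟨i - 1, by omega⟩ : Fin (l + m)) = Fin.castAdd m ⟨i - 1, by omega⟩ := rfl
      rw [this, Fin.append_left]
  have hE2 : ∀ j ≤ m + 1, bridgeExt (l + m) a b (Fin.append h y) (l + j) =
      bridgeExt m (lendpt l a h) b y j := by
    intro j hj
    rcases Nat.eq_zero_or_pos j with h0 | h1
    · subst h0
      rw [bridgeExt_zero]
      rcases Nat.eq_zero_or_pos l with hl0 | hl1
      · subst hl0
        rw [show (0:ℕ) + 0 = 0 from rfl, bridgeExt_zero, lendpt, dif_pos rfl]
      · rw [bridgeExt_of_le a b _ (by omega) (by omega)]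
        have : (⟨l + 0 - 1, by omega⟩ : Fin (l + m)) = Fin.castAdd m ⟨l - 1, by omega⟩ := by
          ext; simp; try omega
        rw [this, Fin.append_left, lendpt, dif_neg (by omega)]
    · rcases Nat.lt_or_ge j (m + 1) with hlt | hge
      · rw [bridgeExt_of_le a b _ (by omega) (by omega),
          bridgeExt_of_le (lendpt l a h) b y h1 (by omega)]
        have : (⟨l + j - 1, by omega⟩ : Fin (l + m)) = Fin.natAdd l ⟨j - 1, by omega⟩ := by
          ext; simp; try omega
        rw [this, Fin.append_right]
      · have : j = m + 1 := by omega
        subst this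
        rw [bridgeExt_of_gt a b _ (by omega), bridgeExt_of_gt (lendpt l a h) b y (by omega)]
  rw [bridgeDensity, headD, bridgeDensity, ← Real.exp_add]
  congr 1
  have hassoc : l + m + 1 = l + (m + 1) := by omega
  rw [← mul_add]
  congr 1
  rw [hassoc, ← Finset.sum_range_add_sum_Ico _ (by omega : l ≤ l + (m + 1)),
    Finset.sum_Ico_eq_sum_range, Nat.add_sub_cancel_left]
  congr 1
  · exact Finset.sum_congr rfl fun i hi => by
      rw [Finset.mem_range] at hi
      rw [hE1 i (by omega), hE1 (i + 1) (by omega)]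
  · exact Finset.sum_congr rfl fun j hj => by
      rw [Finset.mem_range] at hj
      rw [hE2 j (by omega), Nat.add_assoc l j 1, hE2 (j + 1) (by omega)]


def headProj (l m : ℕ) (z : Fin (l + m) → ℝ) : Fin l → ℝ := fun i => z ⟨i.1, by omega⟩

def tailProj (l m : ℕ) (z : Fin (l + m) → ℝ) : Fin m → ℝ := fun j => z ⟨l + j.1, by omega⟩

lemma measurable_headProj (l m : ℕ) : Measurable (headProj l m) :=
  measurable_pi_lambda _ fun i => measurable_pi_apply _

lemma measurable_tailProj (l m : ℕ) : Measurable (tailProj l m) :=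
  measurable_pi_lambda _ fun j => measurable_pi_apply _

lemma headProj_append (l m : ℕ) (h : Fin l → ℝ) (y : Fin m → ℝ) :
    headProj l m (Fin.append h y) = h := by
  funext i
  show Fin.append h y (Fin.castAdd m i) = h i
  exact Fin.append_left h y i

lemma tailProj_append (l m : ℕ) (h : Fin l → ℝ) (y : Fin m → ℝ) :
    tailProj l m (Fin.append h y) = y := by
  funext j
  show Fin.append h y (Fin.natAdd l j) = y j
  exact Fin.append_right h y j

lemma integral_bridgeMeasure (m : ℕ) (a b : ℝ) (F : (Fin m → ℝ) → ℝ) :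
    ∫ x, F x ∂bridgeMeasure m a b =
      (Zb m a b).toReal⁻¹ * ∫ x, F x * bridgeDensity m a b x := by
  have := setIntegral_bridgeMeasure m a b F MeasurableSet.univ
  simpa [Measure.restrict_univ] using this

lemma bridgeInt_abs_le (m : ℕ) (a b : ℝ) (ψ : (Fin m → ℝ) → ℝ) (hψb : ∀ y, |ψ y| ≤ 1) :
    |∫ y, ψ y ∂bridgeMeasure m a b| ≤ 1 := by
  have := norm_integral_le_of_norm_le_const (μ := bridgeMeasure m a b) (f := ψ) (C := 1)
    (Filter.Eventually.of_forall fun y => by simpa [Real.norm_eq_abs] using hψb y)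
  simpa [Real.norm_eq_abs, measure_univ] using this

lemma measurable_bridgeInt (m : ℕ) (b : ℝ) (ψ : (Fin m → ℝ) → ℝ) (hψ : Measurable ψ) :
    Measurable fun a : ℝ => ∫ y, ψ y ∂bridgeMeasure m a b := by
  have heq : (fun a : ℝ => ∫ y, ψ y ∂bridgeMeasure m a b) =
      fun a => (Zb m a b).toReal⁻¹ * ∫ y, ψ y * bridgeDensity m a b y :=
    funext fun a => integral_bridgeMeasure m a b ψ
  rw [heq]
  have h1 : Measurable fun a : ℝ => (Zb m a b).toReal⁻¹ := by
    have : Measurable fun a : ℝ => Zb m a b := by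
      show Measurable fun a : ℝ => ∫⁻ x, ENNReal.ofReal (bridgeDensity m a b x)
      exact Measurable.lintegral_prod_right'
        (ν := (volume : Measure (Fin m → ℝ)))
        ((measurable_bridgeDensity2 m b).ennreal_ofReal)
    exact this.ennreal_toReal.inv
  have h2 : Measurable fun a : ℝ => ∫ y, ψ y * bridgeDensity m a b y := by
    have hsm : StronglyMeasurable fun p : ℝ × (Fin m → ℝ) => ψ p.2 * bridgeDensity m p.1 b p.2 :=
      ((hψ.comp measurable_snd).mul (measurable_bridgeDensity2 m b)).stronglyMeasurable
    exact hsm.integral_prod_right'.measurable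
  exact h1.mul h2

lemma core_lemma (l m : ℕ) (a b : ℝ) {B : Set (Fin l → ℝ)} (hB : MeasurableSet B)
    (ψ : (Fin m → ℝ) → ℝ) (hψ : Measurable ψ) (hψb : ∀ y, |ψ y| ≤ 1) :
    ∫ z in headProj l m ⁻¹' B, ψ (tailProj l m z) ∂bridgeMeasure (l + m) a b =
    ∫ z in headProj l m ⁻¹' B,
      (∫ y, ψ y ∂bridgeMeasure m (lendpt l a (headProj l m z)) b)
        ∂bridgeMeasure (l + m) a b := by
  have hBm : MeasurableSet (headProj l m ⁻¹' B) := measurable_headProj l m hB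
  rw [setIntegral_bridgeMeasure _ _ _ _ hBm, setIntegral_bridgeMeasure _ _ _ _ hBm]
  congr 1
  have hmp := splitE_mp l m
  have hemb := (splitE l m).measurableEmbedding
  have hpre : ⇑(splitE l m) ⁻¹' (headProj l m ⁻¹' B) = B ×ˢ (Set.univ : Set (Fin m → ℝ)) := by
    ext p
    rcases p with ⟨h, y⟩
    simp [Set.mem_preimage, splitE_apply, headProj_append]
  -- integrability of the density on the product
  have hDint : Integrable (fun p : (Fin l → ℝ) × (Fin m → ℝ) =>
      bridgeDensity (l + m) a b (splitE l m p))
      ((volume.restrict B).prod volume) := by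
    have h0 : Integrable (bridgeDensity (l + m) a b) volume := integrable_bridgeDensity _ a b
    have h1 : Integrable (fun p : (Fin l → ℝ) × (Fin m → ℝ) =>
        bridgeDensity (l + m) a b (splitE l m p)) volume :=
      (hmp.integrable_comp_emb hemb).mpr h0
    have heqm : (volume.restrict B).prod (volume : Measure (Fin m → ℝ)) =
        (volume : Measure ((Fin l → ℝ) × (Fin m → ℝ))).restrict (B ×ˢ Set.univ) := by
      rw [Measure.volume_eq_prod, ← Measure.prod_restrict, Measure.restrict_univ]
    rw [heqm]
    exact h1.restrict
  have heqm : (volume.restrict B).prod (volume : Measure (Fin m → ℝ)) =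
      (volume : Measure ((Fin l → ℝ) × (Fin m → ℝ))).restrict (B ×ˢ Set.univ) := by
    rw [Measure.volume_eq_prod, ← Measure.prod_restrict, Measure.restrict_univ]
  have hconv : ∀ F : (Fin (l + m) → ℝ) → ℝ,
      ∫ z in headProj l m ⁻¹' B, F z ∂volume =
        ∫ p, F (splitE l m p) ∂((volume.restrict B).prod volume) := by
    intro F
    rw [← hmp.setIntegral_preimage_emb hemb F (headProj l m ⁻¹' B), hpre, ← heqm]
  -- integrability of the two product integrands
  have hm1 : AEStronglyMeasurable (fun p : (Fin l → ℝ) × (Fin m → ℝ) =>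
      ψ (tailProj l m (splitE l m p)) * bridgeDensity (l + m) a b (splitE l m p))
      ((volume.restrict B).prod volume) :=
    (((hψ.comp (measurable_tailProj l m)).mul (measurable_bridgeDensity (l + m) a b)).comp
      (splitE l m).measurable).aestronglyMeasurable
  have hInt1 : Integrable (fun p : (Fin l → ℝ) × (Fin m → ℝ) =>
      ψ (tailProj l m (splitE l m p)) * bridgeDensity (l + m) a b (splitE l m p))
      ((volume.restrict B).prod volume) := by
    refine hDint.mono' hm1 (Filter.Eventually.of_forall fun p => ?_)
    rw [Real.norm_eq_abs, abs_mul]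
    have h1 := hψb (tailProj l m (splitE l m p))
    have h2 := (bridgeDensity_pos (l + m) a b (splitE l m p)).le
    rw [abs_of_nonneg h2]
    nlinarith [abs_nonneg (ψ (tailProj l m (splitE l m p)))]
  have hm2 : AEStronglyMeasurable (fun p : (Fin l → ℝ) × (Fin m → ℝ) =>
      (∫ y, ψ y ∂bridgeMeasure m (lendpt l a (headProj l m (splitE l m p))) b) *
        bridgeDensity (l + m) a b (splitE l m p))
      ((volume.restrict B).prod volume) := by
    refine Measurable.aestronglyMeasurable ?_
    exact (((measurable_bridgeInt m b ψ hψ).comp ((measurable_lendpt l a).comp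
      ((measurable_headProj l m).comp (splitE l m).measurable))).mul
      ((measurable_bridgeDensity (l + m) a b).comp (splitE l m).measurable))
  have hInt2 : Integrable (fun p : (Fin l → ℝ) × (Fin m → ℝ) =>
      (∫ y, ψ y ∂bridgeMeasure m (lendpt l a (headProj l m (splitE l m p))) b) *
        bridgeDensity (l + m) a b (splitE l m p))
      ((volume.restrict B).prod volume) := by
    refine hDint.mono' hm2 (Filter.Eventually.of_forall fun p => ?_)
    rw [Real.norm_eq_abs, abs_mul]
    have h1 := bridgeInt_abs_le m (lendpt l a (headProj l m (splitE l m p))) b ψ hψb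
    have h2 := (bridgeDensity_pos (l + m) a b (splitE l m p)).le
    rw [abs_of_nonneg h2]
    nlinarith [abs_nonneg (∫ y, ψ y ∂bridgeMeasure m (lendpt l a (headProj l m (splitE l m p))) b)]
  rw [hconv, hconv, integral_prod _ hInt1, integral_prod _ hInt2]
  refine integral_congr_ae (Filter.Eventually.of_forall fun h => ?_)
  simp only [splitE_apply, tailProj_append, headProj_append, dens_factor]
  have hrw1 : (fun y : Fin m → ℝ =>
      ψ y * (headD l a h * bridgeDensity m (lendpt l a h) b y)) =
      fun y => headD l a h * (ψ y * bridgeDensity m (lendpt l a h) b y) :=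
    funext fun y => mul_left_comm _ _ _
  have hrw2 : (fun y : Fin m → ℝ =>
      (∫ y', ψ y' ∂bridgeMeasure m (lendpt l a h) b) *
        (headD l a h * bridgeDensity m (lendpt l a h) b y)) =
      fun y => ((∫ y', ψ y' ∂bridgeMeasure m (lendpt l a h) b) * headD l a h) *
        bridgeDensity m (lendpt l a h) b y :=
    funext fun y => (mul_assoc _ _ _).symm
  rw [hrw1, hrw2, integral_const_mul, integral_const_mul, integral_bridgeDensity,
    integral_bridgeMeasure m (lendpt l a h) b ψ]
  have hz := (Zb_toReal_pos m (lendpt l a h) b).ne'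
  field_simp


def padm (m : ℕ) : (Fin m → ℝ) → (ℕ → ℝ) := fun y i => if h : i < m then y ⟨i, h⟩ else 0

lemma measurable_padm (m : ℕ) : Measurable (padm m) := by
  refine measurable_pi_lambda _ fun i => ?_
  unfold padm
  split_ifs
  exacts [measurable_pi_apply _, measurable_const]

lemma paddedInt (m : ℕ) (a b : ℝ) (φ : (ℕ → ℝ) → ℝ) (hφ : Measurable φ) :
    ∫ y, φ y ∂paddedBridgeMeasure m a b = ∫ y, φ (padm m y) ∂bridgeMeasure m a b := by
  rw [paddedBridgeMeasure]
  exact integral_map (measurable_padm m).aemeasurable hφ.aestronglyMeasurable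

def padSeq (k l : ℕ) (v : Fin k → ℝ) : ℕ → ℝ :=
  fun i => if h : l + i < k then v ⟨l + i, h⟩ else 0

lemma measurable_padSeq (k l : ℕ) : Measurable (padSeq k l) := by
  refine measurable_pi_lambda _ fun i => ?_
  unfold padSeq
  split_ifs
  exacts [measurable_pi_apply _, measurable_const]

def lendSel (k l : ℕ) (x0 : ℝ) (v : Fin k → ℝ) : ℝ :=
  if h : 1 ≤ l ∧ l ≤ k then v ⟨l - 1, by omega⟩ else x0

lemma measurable_lendSel (k l : ℕ) (x0 : ℝ) : Measurable (lendSel k l x0) := by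
  unfold lendSel
  split_ifs
  exacts [measurable_pi_apply _, measurable_const]

noncomputable def Jfun (k l : ℕ) (x0 xend : ℝ) (φ : (ℕ → ℝ) → ℝ) (v : Fin k → ℝ) : ℝ :=
  ∫ y, φ y ∂paddedBridgeMeasure (k - l) (lendSel k l x0 v) xend

lemma Jfun_eq (k l : ℕ) (x0 xend : ℝ) (φ : (ℕ → ℝ) → ℝ) (hφ : Measurable φ) (v : Fin k → ℝ) :
    Jfun k l x0 xend φ v =
      ∫ y, φ (padm (k - l) y) ∂bridgeMeasure (k - l) (lendSel k l x0 v) xend := by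
  rw [Jfun, paddedInt _ _ _ _ hφ]

lemma measurable_Jfun (k l : ℕ) (x0 xend : ℝ) (φ : (ℕ → ℝ) → ℝ) (hφ : Measurable φ) :
    Measurable (Jfun k l x0 xend φ) := by
  have : Jfun k l x0 xend φ = (fun a => ∫ y, φ (padm (k - l) y) ∂bridgeMeasure (k - l) a xend) ∘
      lendSel k l x0 := funext fun v => Jfun_eq k l x0 xend φ hφ v
  rw [this]
  exact (measurable_bridgeInt (k - l) xend _ (hφ.comp (measurable_padm _))).comp
    (measurable_lendSel k l x0)

lemma Jfun_abs_le (k l : ℕ) (x0 xend : ℝ) (φ : (ℕ → ℝ) → ℝ) (hφ : Measurable φ)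
    (hφb : ∀ y, |φ y| ≤ 1) (v : Fin k → ℝ) : |Jfun k l x0 xend φ v| ≤ 1 := by
  rw [Jfun_eq k l x0 xend φ hφ v]
  exact bridgeInt_abs_le _ _ _ _ fun y => hφb _


def stoppedField {Ω : Type*} (k : ℕ) (X : Ω → Fin k → ℝ) (K : Ω → ℕ)
    (hKstop : ∀ l : ℕ, MeasurableSet[headField k X l] {ω | K ω ≤ l}) :
    MeasurableSpace Ω where
  MeasurableSet' A := ∀ l : ℕ, MeasurableSet[headField k X l] (A ∩ {ω | K ω ≤ l})
  measurableSet_empty := fun l => by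
    simpa using @MeasurableSpace.measurableSet_empty Ω (headField k X l)
  measurableSet_compl := fun A hA l => by
    have h1 : Aᶜ ∩ {ω | K ω ≤ l} = {ω | K ω ≤ l} \ (A ∩ {ω | K ω ≤ l}) := by
      ext ω; simp [Set.mem_diff]; tauto
    rw [h1]
    exact MeasurableSet.diff (hKstop l) (hA l)
  measurableSet_iUnion := fun f hf l => by
    have h1 : (⋃ i, f i) ∩ {ω | K ω ≤ l} = ⋃ i, f i ∩ {ω | K ω ≤ l} := by
      rw [Set.iUnion_inter]
    rw [h1]
    exact MeasurableSet.iUnion fun i => hf i l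

lemma measurableSet_stoppedField {Ω : Type*} {k : ℕ} {X : Ω → Fin k → ℝ} {K : Ω → ℕ}
    {hKstop : ∀ l : ℕ, MeasurableSet[headField k X l] {ω | K ω ≤ l}} {A : Set Ω} :
    MeasurableSet[stoppedField k X K hKstop] A ↔
      ∀ l : ℕ, MeasurableSet[headField k X l] (A ∩ {ω | K ω ≤ l}) := Iff.rfl

lemma int_congr_nat {n n' : ℕ} (h : n = n') (a b : ℝ) (φ : (ℕ → ℝ) → ℝ) :
    (∫ y, φ (padm n y) ∂bridgeMeasure n a b) = ∫ y, φ (padm n' y) ∂bridgeMeasure n' a b := by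
  subst h; rfl

end BridgeAux

open BridgeAux

/-- Markov property of the discrete Gaussian bridge at a stopping time: if
`(X₁,…,X_κ) ∼ 𝓑_κ(x₀,x_{κ+1})` and `K < κ` is a stopping time of the natural filtration
of `(X₁,…,X_κ)`, then the conditional law of `(X_{K+1},…,X_κ)` given `(X₁,…,X_K)`
(i.e. given the stopped σ-field) is the Gaussian bridge `𝓑_{κ-K}(X_K, x_{κ+1})`. -/
theorem bridge_markov_stopping_time
    {Ω : Type*} [m0 : MeasurableSpace Ω] (μ : Measure Ω) [IsProbabilityMeasure μ]
    (k : ℕ) (hk : 1 ≤ k) (x0 xend : ℝ)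
    (X : Ω → Fin k → ℝ) (hX : Measurable X)
    (hlaw : Measure.map X μ = bridgeMeasure k x0 xend)
    (K : Ω → ℕ) (hKlt : ∀ ω, K ω < k)
    -- `K` is a stopping time: `{K ≤ l} ∈ σ(X_1,…,X_l)`
    (hKstop : ∀ l : ℕ, MeasurableSet[headField k X l] {ω | K ω ≤ l})
    (φ : (ℕ → ℝ) → ℝ) (hφ : Measurable φ) (hφbdd : ∀ y, |φ y| ≤ 1) :
    μ[(fun ω => φ fun i : ℕ => if h : K ω + i < k then X ω ⟨K ω + i, h⟩ else 0) |
        MeasurableSpace.generateFrom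
          {A | ∀ l : ℕ, MeasurableSet[headField k X l] (A ∩ {ω | K ω ≤ l})}]
      =ᵐ[μ] fun ω =>
        ∫ y, φ y ∂(paddedBridgeMeasure (k - K ω)
          (if h : K ω = 0 then x0 else X ω ⟨K ω - 1, by have := hKlt ω; omega⟩) xend) := by
  classical
  set S : Set (Set Ω) :=
    {A | ∀ l : ℕ, MeasurableSet[headField k X l] (A ∩ {ω | K ω ≤ l})} with hS
  have hXhead : ∀ l : ℕ,
      Measurable fun ω (j : Fin (min l k)) => X ω ⟨j.1, by have := j.2; omega⟩ :=
    fun l => measurable_pi_lambda _ fun j => (measurable_pi_apply _).comp hX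
  have hFle : ∀ l, headField k X l ≤ m0 := by
    intro l s hs
    obtain ⟨t, ht, rfl⟩ := MeasurableSpace.measurableSet_comap.mp hs
    exact hXhead l ht
  have hFmono : ∀ {l l' : ℕ}, l ≤ l' → headField k X l ≤ headField k X l' := by
    intro l l' hll' s hs
    obtain ⟨t, ht, rfl⟩ := MeasurableSpace.measurableSet_comap.mp hs
    refine MeasurableSpace.measurableSet_comap.mpr ?_
    exact ⟨(fun (v : Fin (min l' k) → ℝ) (j : Fin (min l k)) =>
      v ⟨j.1, by have := j.2; omega⟩) ⁻¹' t,
      (measurable_pi_lambda _ fun j => measurable_pi_apply _) ht, rfl⟩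
  have hKstopF : ∀ j, MeasurableSet[headField k X j] {ω | K ω = j} := by
    intro j
    cases j with
    | zero =>
      have h1 : {ω | K ω = 0} = {ω | K ω ≤ 0} := by ext ω; simp
      rw [h1]; exact hKstop 0
    | succ n =>
      have h1 : {ω | K ω = n + 1} = {ω | K ω ≤ n + 1} \ {ω | K ω ≤ n} := by
        ext ω; simp [Set.mem_diff]; omega
      rw [h1]
      exact MeasurableSet.diff (hKstop (n + 1)) (hFmono (Nat.le_succ n) _ (hKstop n))
  have hKeq : ∀ j, MeasurableSet {ω | K ω = j} := fun j => hFle j _ (hKstopF j)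
  have hKm : Measurable K := measurable_to_countable' fun n => by
    simpa only [Set.preimage, Set.mem_singleton_iff] using hKeq n
  have hGgen : MeasurableSpace.generateFrom S = stoppedField k X K hKstop :=
    le_antisymm (MeasurableSpace.generateFrom_le fun t ht => ht)
      fun t ht => MeasurableSpace.measurableSet_generateFrom ht
  have hm : MeasurableSpace.generateFrom S ≤ m0 := by
    rw [hGgen]
    intro t ht
    have h2 := ht k
    have h3 : t ∩ {ω | K ω ≤ k} = t := by
      ext ω; simp only [Set.mem_inter_iff, Set.mem_setOf_eq, and_iff_left_iff_imp]
      intro _; exact (hKlt ω).le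
    rw [h3] at h2
    exact hFle k _ h2
  haveI : SigmaFinite (μ.trim hm) := by infer_instance
  set f : Ω → ℝ :=
    fun ω => φ fun i : ℕ => if h : K ω + i < k then X ω ⟨K ω + i, h⟩ else 0 with hfdef
  set g : Ω → ℝ := fun ω => Jfun k (K ω) x0 xend φ (X ω) with hgdef
  have hfrw : f = fun ω => φ (padSeq k (K ω) (X ω)) := rfl
  have hfm : Measurable f := by
    rw [hfrw]
    have h1 : Measurable fun p : (Fin k → ℝ) × ℕ => padSeq k p.2 p.1 :=
      measurable_from_prod_countable_left fun n => measurable_padSeq k n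
    exact hφ.comp (h1.comp (hX.prodMk hKm))
  have hgm0 : Measurable g := by
    have h1 : Measurable fun p : (Fin k → ℝ) × ℕ => Jfun k p.2 x0 xend φ p.1 :=
      measurable_from_prod_countable_left fun n => measurable_Jfun k n x0 xend φ hφ
    exact h1.comp (hX.prodMk hKm)
  have hfint : Integrable f μ := by
    refine (integrable_const (1:ℝ)).mono' hfm.aestronglyMeasurable ?_
    refine Filter.Eventually.of_forall fun ω => ?_
    rw [hfrw]
    simpa [Real.norm_eq_abs] using hφbdd (padSeq k (K ω) (X ω))
  have hgb : ∀ ω, |g ω| ≤ 1 := fun ω => Jfun_abs_le k (K ω) x0 xend φ hφ hφbdd (X ω)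
  have hgint : Integrable g μ := by
    refine (integrable_const (1:ℝ)).mono' hgm0.aestronglyMeasurable ?_
    exact Filter.Eventually.of_forall fun ω => by simpa [Real.norm_eq_abs] using hgb ω
  -- G'-measurability of g
  have hgG : Measurable[stoppedField k X K hKstop] g := by
    intro t ht
    show ∀ l : ℕ, MeasurableSet[headField k X l] (g ⁻¹' t ∩ {ω | K ω ≤ l})
    intro l
    have hrep : g ⁻¹' t ∩ {ω | K ω ≤ l} =
        ⋃ j ∈ Set.Iio (l + 1),
          ({ω | K ω = j} ∩ (fun ω => Jfun k j x0 xend φ (X ω)) ⁻¹' t) := by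
      ext ω
      simp only [Set.mem_inter_iff, Set.mem_preimage, Set.mem_iUnion, Set.mem_Iio,
        Set.mem_setOf_eq]
      constructor
      · rintro ⟨hgt, hKl⟩
        exact ⟨K ω, by omega, rfl, hgt⟩
      · rintro ⟨j, hj, hKj, hJt⟩
        refine ⟨?_, by omega⟩
        show Jfun k (K ω) x0 xend φ (X ω) ∈ t
        rw [hKj]; exact hJt
    rw [hrep]
    refine MeasurableSet.biUnion (Set.to_countable _) fun j hj => ?_
    have hj' : j < l + 1 := hj
    rcases Nat.lt_or_ge j k with hjk | hjk
    · refine MeasurableSet.inter (hFmono (by omega) _ (hKstopF j)) ?_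
      refine hFmono (by omega : j ≤ l) _ ?_
      refine MeasurableSpace.measurableSet_comap.mpr ?_
      refine ⟨(fun w : Fin (min j k) → ℝ => ∫ y, φ (padm (k - j) y)
          ∂bridgeMeasure (k - j)
            (if h : 1 ≤ j ∧ j ≤ k then w ⟨j - 1, by omega⟩ else x0) xend) ⁻¹' t, ?_, ?_⟩
      · refine ((measurable_bridgeInt (k - j) xend _ (hφ.comp (measurable_padm _))).comp ?_) ht
        by_cases hc : 1 ≤ j ∧ j ≤ k
        · simp only [dif_pos hc]
          exact measurable_pi_apply _
        · simp only [dif_neg hc]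
          exact measurable_const
      · ext ω
        simp only [Set.mem_preimage]
        rw [Jfun_eq k j x0 xend φ hφ]
        have hmid : (if h : 1 ≤ j ∧ j ≤ k then X ω ⟨j - 1, by omega⟩ else x0) =
            lendSel k j x0 (X ω) := by
          unfold lendSel
          split_ifs <;> rfl
        rw [← hmid]
    · have hemp : {ω | K ω = j} = (∅ : Set Ω) := by
        ext ω; simp only [Set.mem_setOf_eq, Set.mem_empty_iff_false, iff_false]
        have := hKlt ω; omega
      rw [hemp, Set.empty_inter]
      exact @MeasurableSpace.measurableSet_empty Ω (headField k X l)
  -- set-integral equality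
  have hgeq : ∀ A : Set Ω, MeasurableSet[MeasurableSpace.generateFrom S] A → μ A < ⊤ →
      ∫ ω in A, g ω ∂μ = ∫ ω in A, f ω ∂μ := by
    intro A hA0 _
    have hA : ∀ l : ℕ, MeasurableSet[headField k X l] (A ∩ {ω | K ω ≤ l}) := by
      have := hA0
      rw [hGgen] at this
      exact this
    have hAm0 : MeasurableSet A := hm A hA0
    have hsum : ∀ (F : Ω → ℝ) (ω : Ω),
        ∑ l ∈ Finset.range k, Set.indicator {ω' | K ω' = l} F ω = F ω := by
      intro F ω
      rw [Finset.sum_eq_single_of_mem (K ω) (Finset.mem_range.mpr (hKlt ω))]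
      · exact Set.indicator_of_mem (show ω ∈ {ω' | K ω' = K ω} from rfl) F
      · intro j _ hj
        exact Set.indicator_of_notMem
          (show ω ∉ {ω' | K ω' = j} from fun h => hj ((show K ω = j from h).symm)) F
    have keystep : ∀ l, l < k → ∫ ω in A ∩ {ω' | K ω' = l}, g ω ∂μ =
        ∫ ω in A ∩ {ω' | K ω' = l}, f ω ∂μ := by
      intro l hl
      have hsetm : MeasurableSet (A ∩ {ω' | K ω' = l}) := hAm0.inter (hKeq l)
      have hgcong : ∫ ω in A ∩ {ω' | K ω' = l}, g ω ∂μ =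
          ∫ ω in A ∩ {ω' | K ω' = l}, Jfun k l x0 xend φ (X ω) ∂μ := by
        refine setIntegral_congr_fun hsetm fun ω hω => ?_
        show Jfun k (K ω) x0 xend φ (X ω) = _
        rw [hω.2]
      have hfcong : ∫ ω in A ∩ {ω' | K ω' = l}, f ω ∂μ =
          ∫ ω in A ∩ {ω' | K ω' = l}, φ (padSeq k l (X ω)) ∂μ := by
        refine setIntegral_congr_fun hsetm fun ω hω => ?_
        show φ (padSeq k (K ω) (X ω)) = _
        rw [hω.2]
      rw [hgcong, hfcong]
      have hinF : MeasurableSet[headField k X l] (A ∩ {ω' | K ω' = l}) := by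
        have h1 : A ∩ {ω' | K ω' = l} = (A ∩ {ω' | K ω' ≤ l}) ∩ {ω' | K ω' = l} := by
          ext ω
          simp only [Set.mem_inter_iff, Set.mem_setOf_eq]
          constructor
          · rintro ⟨h1, h2⟩; exact ⟨⟨h1, by omega⟩, h2⟩
          · rintro ⟨⟨h1, _⟩, h2⟩; exact ⟨h1, h2⟩
        rw [h1]
        exact (hA l).inter (hKstopF l)
      obtain ⟨B, hBmeas, hBeq⟩ := MeasurableSpace.measurableSet_comap.mp hinF
      rw [← hBeq]
      have hpre : (fun ω (j : Fin (min l k)) => X ω ⟨j.1, by have := j.2; omega⟩) ⁻¹' B =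
          X ⁻¹' ((fun (v : Fin k → ℝ) (j : Fin (min l k)) =>
            v ⟨j.1, by have := j.2; omega⟩) ⁻¹' B) := rfl
      rw [hpre]
      obtain ⟨m, rfl⟩ : ∃ m, k = l + m := ⟨k - l, by omega⟩
      set sπ : Set (Fin (l + m) → ℝ) :=
        (fun (v : Fin (l + m) → ℝ) (j : Fin (min l (l + m))) =>
          v ⟨j.1, by have := j.2; omega⟩) ⁻¹' B with hsπ
      have hsπm : MeasurableSet sπ :=
        (measurable_pi_lambda _ fun j => measurable_pi_apply _) hBmeas
      set B' : Set (Fin l → ℝ) :=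
        (fun (h : Fin l → ℝ) (j : Fin (min l (l + m))) =>
          h ⟨j.1, by have := j.2; omega⟩) ⁻¹' B with hB'
      have hB'm : MeasurableSet B' :=
        (measurable_pi_lambda _ fun j => measurable_pi_apply _) hBmeas
      have hπ : sπ = headProj l m ⁻¹' B' := rfl
      have hψ : Measurable fun y : Fin m → ℝ => φ (padm m y) := hφ.comp (measurable_padm m)
      have hψb : ∀ y : Fin m → ℝ, |φ (padm m y)| ≤ 1 := fun y => hφbdd _
      have htail : ∀ v : Fin (l + m) → ℝ,
          φ (padSeq (l + m) l v) = φ (padm m (tailProj l m v)) := by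
        intro v
        congr 1
        funext i
        unfold padSeq padm tailProj
        by_cases h : i < m
        · rw [dif_pos (by omega : l + i < l + m), dif_pos h]
        · rw [dif_neg (by omega), dif_neg h]
      have hJ : ∀ v : Fin (l + m) → ℝ, Jfun (l + m) l x0 xend φ v =
          ∫ y, φ (padm m y) ∂bridgeMeasure m (lendpt l x0 (headProj l m v)) xend := by
        intro v
        rw [Jfun_eq (l + m) l x0 xend φ hφ v,
          int_congr_nat (by omega : (l + m) - l = m) _ xend φ]
        have hlend : lendSel (l + m) l x0 v = lendpt l x0 (headProj l m v) := by
          unfold lendSel lendpt headProj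
          by_cases h0 : l = 0
          · rw [dif_neg (by omega), dif_pos h0]
          · rw [dif_pos ⟨by omega, by omega⟩, dif_neg h0]
        rw [hlend]
      have hcore : ∫ v in sπ, φ (padSeq (l + m) l v) ∂bridgeMeasure (l + m) x0 xend =
          ∫ v in sπ, Jfun (l + m) l x0 xend φ v ∂bridgeMeasure (l + m) x0 xend := by
        rw [hπ]
        calc ∫ v in headProj l m ⁻¹' B', φ (padSeq (l + m) l v) ∂bridgeMeasure (l + m) x0 xend
            = ∫ v in headProj l m ⁻¹' B', φ (padm m (tailProj l m v))
                ∂bridgeMeasure (l + m) x0 xend :=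
              integral_congr_ae (Filter.Eventually.of_forall fun v => htail v)
          _ = ∫ v in headProj l m ⁻¹' B',
                (∫ y, φ (padm m y) ∂bridgeMeasure m (lendpt l x0 (headProj l m v)) xend)
                ∂bridgeMeasure (l + m) x0 xend :=
              core_lemma l m x0 xend hB'm _ hψ hψb
          _ = ∫ v in headProj l m ⁻¹' B', Jfun (l + m) l x0 xend φ v
                ∂bridgeMeasure (l + m) x0 xend :=
              integral_congr_ae (Filter.Eventually.of_forall fun v => (hJ v).symm)
      calc ∫ ω in X ⁻¹' sπ, Jfun (l + m) l x0 xend φ (X ω) ∂μ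
          = ∫ v in sπ, Jfun (l + m) l x0 xend φ v ∂(Measure.map X μ) :=
            (setIntegral_map hsπm
              (measurable_Jfun (l + m) l x0 xend φ hφ).aestronglyMeasurable
              hX.aemeasurable).symm
        _ = ∫ v in sπ, Jfun (l + m) l x0 xend φ v ∂bridgeMeasure (l + m) x0 xend := by
            rw [hlaw]
        _ = ∫ v in sπ, φ (padSeq (l + m) l v) ∂bridgeMeasure (l + m) x0 xend := hcore.symm
        _ = ∫ v in sπ, φ (padSeq (l + m) l v) ∂(Measure.map X μ) := by rw [hlaw]
        _ = ∫ ω in X ⁻¹' sπ, φ (padSeq (l + m) l (X ω)) ∂μ :=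
            setIntegral_map hsπm
              (hφ.comp (measurable_padSeq (l + m) l)).aestronglyMeasurable hX.aemeasurable
    calc ∫ ω in A, g ω ∂μ
        = ∫ ω in A, ∑ l ∈ Finset.range k, Set.indicator {ω' | K ω' = l} g ω ∂μ :=
          integral_congr_ae (Filter.Eventually.of_forall fun ω => (hsum g ω).symm)
      _ = ∑ l ∈ Finset.range k, ∫ ω in A, Set.indicator {ω' | K ω' = l} g ω ∂μ :=
          integral_finset_sum _ fun l _ => (hgint.restrict).indicator (hKeq l)
      _ = ∑ l ∈ Finset.range k, ∫ ω in A ∩ {ω' | K ω' = l}, g ω ∂μ :=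
          Finset.sum_congr rfl fun l _ => setIntegral_indicator (hKeq l)
      _ = ∑ l ∈ Finset.range k, ∫ ω in A ∩ {ω' | K ω' = l}, f ω ∂μ :=
          Finset.sum_congr rfl fun l hl =>
            keystep l (Finset.mem_range.mp hl)
      _ = ∑ l ∈ Finset.range k, ∫ ω in A, Set.indicator {ω' | K ω' = l} f ω ∂μ :=
          Finset.sum_congr rfl fun l _ => (setIntegral_indicator (hKeq l)).symm
      _ = ∫ ω in A, ∑ l ∈ Finset.range k, Set.indicator {ω' | K ω' = l} f ω ∂μ :=
          (integral_finset_sum _ fun l _ => (hfint.restrict).indicator (hKeq l)).symm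
      _ = ∫ ω in A, f ω ∂μ :=
          integral_congr_ae (Filter.Eventually.of_forall fun ω => hsum f ω)
  have main : g =ᵐ[μ] μ[f | MeasurableSpace.generateFrom S] := by
    refine ae_eq_condExp_of_forall_setIntegral_eq hm hfint ?_ hgeq ?_
    · intro s hs hμs
      refine ((integrable_const (1:ℝ)).restrict).mono' hgm0.aestronglyMeasurable.restrict ?_
      exact Filter.Eventually.of_forall fun ω => by simpa [Real.norm_eq_abs] using hgb ω
    · refine StronglyMeasurable.aestronglyMeasurable ?_
      rw [hGgen]
      exact hgG.stronglyMeasurable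
  refine main.symm.trans (Filter.Eventually.of_forall fun ω => ?_)
  show Jfun k (K ω) x0 xend φ (X ω) = _
  rw [Jfun]
  congr 2
  unfold lendSel
  by_cases h0 : K ω = 0
  · rw [dif_neg (by omega), dif_pos h0]
  · rw [dif_pos ⟨by omega, (hKlt ω).le⟩, dif_neg h0]
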